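/- arXiv:2303.14578 — 2 statements merged into one kernel-verified Lean document; each statement's English description precedes it below -/
import Mathlib

section
/- Fix K > 0 and suppose J ≥ 1. Then the equation m = tanh(K m² + J m) has exactly one solution m₂ in the open interval (0,1). -/
open Real Set

lemma tanh_formula (y : ℝ) : Real.tanh y = (Real.exp (2*y) - 1) / (Real.exp (2*y) + 1) := by
  rw [Real.tanh_eq_sinh_div_cosh, Real.sinh_eq, Real.cosh_eq]
  have h : Real.exp y ≠ 0 := (Real.exp_pos y).ne'
  rw [show (2:ℝ)*y = y + y by ring, Real.exp_add, Real.exp_neg]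
  field_simp

noncomputable def atanh (m : ℝ) : ℝ := (Real.log (1+m) - Real.log (1-m)) / 2

lemma atanh_zero : atanh 0 = 0 := by simp [atanh]

lemma exp_two_atanh {m : ℝ} (h0 : -1 < m) (h1 : m < 1) :
    Real.exp (2 * atanh m) = (1+m)/(1-m) := by
  have h1' : (0:ℝ) < 1 - m := by linarith
  have h0' : (0:ℝ) < 1 + m := by linarith
  rw [atanh]
  rw [show 2 * ((Real.log (1+m) - Real.log (1-m)) / 2) = Real.log (1+m) - Real.log (1-m) by ring,
    Real.exp_sub, Real.exp_log h0', Real.exp_log h1']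

lemma tanh_eq_iff {m y : ℝ} (h0 : 0 < m) (h1 : m < 1) :
    m = Real.tanh y ↔ y = atanh m := by
  have h1' : (0:ℝ) < 1 - m := by linarith
  constructor
  · intro h
    have hE : Real.exp (2*y) = (1+m)/(1-m) := by
      rw [tanh_formula] at h
      have hE1 : (0:ℝ) < Real.exp (2*y) + 1 := by positivity
      field_simp at h ⊢
      linarith [h]
    have := congrArg Real.log hE
    rw [Real.log_exp] at this
    have h2 : 2 * atanh m = Real.log ((1+m)/(1-m)) := by
      rw [← exp_two_atanh (by linarith) h1, Real.log_exp]
    linarith [h2, this]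
  · intro h
    subst h
    rw [tanh_formula, exp_two_atanh (by linarith) h1]
    field_simp
    ring

lemma hasDerivAt_atanh {m : ℝ} (h0 : -1 < m) (h1 : m < 1) :
    HasDerivAt atanh (1/(1-m^2)) m := by
  have h1' : (0:ℝ) < 1 - m := by linarith
  have h0' : (0:ℝ) < 1 + m := by linarith
  have ha : HasDerivAt (fun m : ℝ => Real.log (1+m)) (1/(1+m)) m := by
    have := (Real.hasDerivAt_log h0'.ne').comp m (((hasDerivAt_id m).const_add 1))
    exact this.congr_deriv (by simp)
  have hb : HasDerivAt (fun m : ℝ => Real.log (1-m)) (-(1/(1-m))) m := by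
    have := (Real.hasDerivAt_log h1'.ne').comp m (((hasDerivAt_id m).neg).const_add 1)
    exact this.congr_deriv (by simp [sub_eq_add_neg])
  have h2 : (1:ℝ) - m^2 ≠ 0 := by nlinarith
  have := (ha.sub hb).div_const 2
  refine this.congr_deriv ?_
  field_simp
  ring

lemma hasDerivAt_frac {m : ℝ} (h0 : -1 < m) (h1 : m < 1) :
    HasDerivAt (fun m : ℝ => m / (1 - m^2)) ((1+m^2)/(1-m^2)^2) m := by
  have h2 : (1:ℝ) - m^2 ≠ 0 := by nlinarith
  have hd : HasDerivAt (fun m : ℝ => 1 - m^2) (-(2*m)) m := by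
    simpa using ((hasDerivAt_pow 2 m).const_sub 1)
  have := (hasDerivAt_id m).div hd h2
  refine this.congr_deriv ?_
  simp only [id]
  field_simp
  ring

/-- atanh a ≤ a/(1-a²) on [0,1). -/
lemma atanh_le {a : ℝ} (h0 : 0 ≤ a) (h1 : a < 1) : atanh a ≤ a / (1 - a^2) := by
  set Q : ℝ → ℝ := fun m => m / (1 - m^2) - atanh m with hQ
  have key : ∀ x ∈ Ico (0:ℝ) 1, HasDerivAt Q ((1+x^2)/(1-x^2)^2 - 1/(1-x^2)) x := by
    intro x hx
    exact (hasDerivAt_frac (by linarith [hx.1]) hx.2).sub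
      (hasDerivAt_atanh (by linarith [hx.1]) hx.2)
  have mono : MonotoneOn Q (Ico (0:ℝ) 1) := by
    apply monotoneOn_of_deriv_nonneg (convex_Ico 0 1)
    · exact fun x hx => (key x hx).continuousAt.continuousWithinAt
    · rw [interior_Ico]
      exact fun x hx => ((key x ⟨hx.1.le, hx.2⟩).differentiableAt).differentiableWithinAt
    · rw [interior_Ico]
      intro x hx
      rw [(key x ⟨hx.1.le, hx.2⟩).deriv]
      have h2 : (0:ℝ) < 1 - x^2 := by nlinarith [hx.1, hx.2]
      have : (1+x^2)/(1-x^2)^2 - 1/(1-x^2) = (2*x^2)/(1-x^2)^2 := by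
        field_simp
        ring
      rw [this]
      positivity
  have := mono (by constructor <;> [rfl; norm_num] : (0:ℝ) ∈ Ico (0:ℝ) 1) ⟨h0, h1⟩ h0
  simp [hQ, atanh_zero] at this
  linarith [this]

/-- H m = m/(1-m²) + J m - 2 atanh m is positive on (0,1) when J ≥ 1. -/
lemma H_pos {J : ℝ} (hJ : 1 ≤ J) {m : ℝ} (h0 : 0 < m) (h1 : m < 1) :
    0 < m / (1 - m^2) + J*m - 2 * atanh m := by
  set H : ℝ → ℝ := fun m => m / (1 - m^2) + J*m - 2 * atanh m with hH
  have key : ∀ x ∈ Ico (0:ℝ) 1,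
      HasDerivAt H ((1+x^2)/(1-x^2)^2 + J - 2 * (1/(1-x^2))) x := by
    intro x hx
    have := ((hasDerivAt_frac (by linarith [hx.1]) hx.2).add
      ((hasDerivAt_id x).const_mul J)).sub
      ((hasDerivAt_atanh (by linarith [hx.1]) hx.2).const_mul 2)
    exact this.congr_deriv (by simp)
  have mono : StrictMonoOn H (Ico (0:ℝ) 1) := by
    apply strictMonoOn_of_deriv_pos (convex_Ico 0 1)
    · exact fun x hx => (key x hx).continuousAt.continuousWithinAt
    · rw [interior_Ico]
      intro x hx
      rw [(key x ⟨hx.1.le, hx.2⟩).deriv]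
      have h2 : (0:ℝ) < 1 - x^2 := by nlinarith [hx.1, hx.2]
      have h3 : (1+x^2)/(1-x^2)^2 + J - 2 * (1/(1-x^2))
          = (1 + x^2 + J*(1-x^2)^2 - 2*(1-x^2)) / (1-x^2)^2 := by
        field_simp
      rw [h3]
      apply div_pos _ (by positivity)
      nlinarith [hx.1, hx.2, sq_nonneg (1-x^2), sq_nonneg x]
  have := mono (⟨le_refl 0, by norm_num⟩ : (0:ℝ) ∈ Ico (0:ℝ) 1) ⟨h0.le, h1⟩ h0
  simpa [hH, atanh_zero] using this

/-- F m = (atanh m - J m)/m² with derivative m·H m/m⁴. -/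
lemma hasDerivAt_F {J m : ℝ} (h0 : 0 < m) (h1 : m < 1) :
    HasDerivAt (fun m : ℝ => (atanh m - J*m)/m^2)
      ((m * (m / (1 - m^2) + J*m - 2 * atanh m)) / m^4) m := by
  have h2 : (1:ℝ) - m^2 ≠ 0 := by nlinarith
  have hnum : HasDerivAt (fun m : ℝ => atanh m - J*m) (1/(1-m^2) - J) m := by
    have := (hasDerivAt_atanh (by linarith : (-1:ℝ) < m) h1).sub ((hasDerivAt_id m).const_mul J)
    exact this.congr_deriv (by simp)
  have hden : HasDerivAt (fun m : ℝ => m^2) (2*m) m := by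
    simpa using hasDerivAt_pow 2 m
  have := hnum.div hden (pow_ne_zero 2 h0.ne')
  refine this.congr_deriv ?_
  rw [show (m^2)^2 = m^4 by ring]
  congr 1
  field_simp
  ring

lemma F_strictMono {J : ℝ} (hJ : 1 ≤ J) :
    StrictMonoOn (fun m : ℝ => (atanh m - J*m)/m^2) (Ioo (0:ℝ) 1) := by
  apply strictMonoOn_of_deriv_pos (convex_Ioo 0 1)
  · exact fun x hx => (hasDerivAt_F hx.1 hx.2).continuousAt.continuousWithinAt
  · rw [interior_Ioo]
    intro x hx
    rw [(hasDerivAt_F hx.1 hx.2).deriv]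
    exact div_pos (mul_pos hx.1 (H_pos hJ hx.1 hx.2)) (pow_pos hx.1 4)

theorem unique_positive_solution_of_consistency (K J : ℝ) (hK : 0 < K) (hJ : 1 ≤ J) :
    ∃! m : ℝ, m ∈ Set.Ioo (0 : ℝ) 1 ∧ m = Real.tanh (K * m ^ 2 + J * m) := by
  set F : ℝ → ℝ := fun m => (atanh m - J*m)/m^2 with hF
  -- the upper endpoint b
  set b : ℝ := Real.tanh (J + K + 1) with hb
  have hb01 : b ∈ Ioo (0:ℝ) 1 := by
    rw [hb, tanh_formula]
    have hE : 1 < Real.exp (2*(J+K+1)) := by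
      nlinarith [Real.add_one_le_exp (2*(J+K+1))]
    constructor
    · exact div_pos (by linarith) (by linarith)
    · rw [div_lt_one (by linarith)]; linarith
  have hAb : atanh b = J + K + 1 := ((tanh_eq_iff hb01.1 hb01.2).mp rfl).symm
  have hFb : K < F b := by
    have h1 : K + 1 ≤ atanh b - J*b := by
      rw [hAb]; nlinarith [hb01.2, hJ]
    have hb2 : 0 < b^2 := pow_pos hb01.1 2
    have hb2' : b^2 ≤ 1 := by nlinarith [hb01.1, hb01.2]
    calc K < K + 1 := by linarith
    _ ≤ atanh b - J*b := h1
    _ ≤ (atanh b - J*b)/b^2 := by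
        rw [le_div_iff₀ hb2]; nlinarith [h1, hK]
  -- the lower endpoint a
  set a : ℝ := min (min (1/2) (K/2)) (b/2) with ha
  have ha0 : 0 < a :=
    lt_min (lt_min (by norm_num) (by linarith)) (by linarith [hb01.1])
  have hahalf : a ≤ 1/2 := le_trans (min_le_left _ _) (min_le_left _ _)
  have haK : a ≤ K/2 := le_trans (min_le_left _ _) (min_le_right _ _)
  have hab : a < b := lt_of_le_of_lt (min_le_right _ _) (by linarith [hb01.1])
  have ha1 : a < 1 := by linarith
  have ha2 : (0:ℝ) < 1 - a^2 := by nlinarith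
  have hFa : F a < K := by
    have h1 : atanh a ≤ a/(1-a^2) := atanh_le ha0.le ha1
    have h2 : atanh a - J*a ≤ a^3/(1-a^2) := by
      have h3 : a/(1-a^2) - a = a^3/(1-a^2) := by field_simp; ring
      nlinarith [h1, hJ, ha0]
    have h4 : F a ≤ (a^3/(1-a^2))/a^2 := by
      exact (div_le_div_iff_of_pos_right (pow_pos ha0 2)).mpr h2
    have h5 : (a^3/(1-a^2))/a^2 = a/(1-a^2) := by
      field_simp
    have h6 : a/(1-a^2) < K := by
      rw [div_lt_iff₀ ha2]
      nlinarith [hK, haK, hahalf, ha0]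
    calc F a ≤ a/(1-a^2) := h5 ▸ h4
    _ < K := h6
  -- existence via IVT
  have hcont : ContinuousOn F (Icc a b) := fun x hx =>
    (hasDerivAt_F (J := J) (lt_of_lt_of_le ha0 hx.1)
      (lt_of_le_of_lt hx.2 hb01.2)).continuousAt.continuousWithinAt
  obtain ⟨m, hm, hFm⟩ := intermediate_value_Icc hab.le hcont ⟨hFa.le, hFb.le⟩
  have hm01 : m ∈ Ioo (0:ℝ) 1 :=
    ⟨lt_of_lt_of_le ha0 hm.1, lt_of_le_of_lt hm.2 hb01.2⟩
  have hm2 : (m:ℝ)^2 ≠ 0 := pow_ne_zero 2 hm01.1.ne'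
  have hAm : K * m^2 + J*m = atanh m := by
    have : atanh m - J*m = K * m^2 := by
      rw [hF] at hFm; rw [div_eq_iff hm2] at hFm; linarith [hFm]
    linarith
  have hfix : m = Real.tanh (K * m^2 + J*m) :=
    (tanh_eq_iff hm01.1 hm01.2).mpr hAm
  refine ⟨m, ⟨hm01, hfix⟩, ?_⟩
  rintro m' ⟨hm'01, heq⟩
  have hAm' : K * m'^2 + J*m' = atanh m' := (tanh_eq_iff hm'01.1 hm'01.2).mp heq
  have hFm' : F m' = K := by
    rw [hF]
    have hm'2 : (m':ℝ)^2 ≠ 0 := pow_ne_zero 2 hm'01.1.ne'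
    rw [div_eq_iff hm'2]
    linarith [hAm']
  exact (F_strictMono hJ).injOn hm'01 hm01 (hFm'.trans hFm.symm)
end

section
/- Fix α > 0 and consider m*(K) defined for small K > 0 as the unique positive solution of m = tanh(K m² + (1+αK) m). Then m*(K)/√K → √(3α) as K → 0⁺. -/
open Real Set

lemma aux1 {x : ℝ} (hx : 0 ≤ x) : Real.sinh x ≤ x * Real.cosh x := by
  have hd : ∀ y : ℝ, HasDerivAt (fun t : ℝ => t * Real.cosh t - Real.sinh t)
      (y * Real.sinh y) y := by
    intro y
    have h := ((hasDerivAt_id y).mul (Real.hasDerivAt_cosh y)).sub (Real.hasDerivAt_sinh y)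
    refine h.congr_deriv ?_
    simp only [id_eq]
    ring
  have hmono : MonotoneOn (fun t : ℝ => t * Real.cosh t - Real.sinh t) (Set.Ici 0) := by
    apply monotoneOn_of_deriv_nonneg (convex_Ici 0)
    · exact ((continuous_id.mul Real.continuous_cosh).sub Real.continuous_sinh).continuousOn
    · intro y hy
      exact (hd y).differentiableAt.differentiableWithinAt
    · intro y hy
      rw [interior_Ici] at hy
      rw [(hd y).deriv]
      exact mul_nonneg (le_of_lt hy) (Real.sinh_nonneg_iff.2 (le_of_lt hy))
  have h := hmono (Set.self_mem_Ici) (Set.mem_Ici.2 hx) hx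
  simpa using h

lemma aux2 {x : ℝ} (hx : 0 ≤ x) : (x - x^3/3) * Real.cosh x ≤ Real.sinh x := by
  have hd : ∀ y : ℝ, HasDerivAt (fun t : ℝ => Real.sinh t - (t - t^3/3) * Real.cosh t)
      (y^2 * Real.cosh y - (y - y^3/3) * Real.sinh y) y := by
    intro y
    have h := (Real.hasDerivAt_sinh y).sub
      (((hasDerivAt_id y).sub ((hasDerivAt_pow 3 y).div_const 3)).mul (Real.hasDerivAt_cosh y))
    refine h.congr_deriv ?_
    simp
    ring
  have hmono : MonotoneOn (fun t : ℝ => Real.sinh t - (t - t^3/3) * Real.cosh t) (Set.Ici 0) := by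
    apply monotoneOn_of_deriv_nonneg (convex_Ici 0)
    · exact (Real.continuous_sinh.sub (((continuous_id.sub ((continuous_pow 3).div_const 3)).mul
        Real.continuous_cosh))).continuousOn
    · intro y hy
      exact (hd y).differentiableAt.differentiableWithinAt
    · intro y hy
      rw [interior_Ici] at hy
      rw [(hd y).deriv]
      have hs : 0 ≤ Real.sinh y := Real.sinh_nonneg_iff.2 hy.le
      have h1 := aux1 hy.le
      nlinarith [mul_le_mul_of_nonneg_left h1 hy.le,
        mul_nonneg (mul_nonneg (mul_nonneg hy.le hy.le) hy.le) hs]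
  have h := hmono (Set.self_mem_Ici) (Set.mem_Ici.2 hx) hx
  simp at h
  linarith

lemma aux3 {x : ℝ} (hx : 0 ≤ x) :
    Real.sinh x ≤ (x - x^3/3 + 2*x^5/15) * Real.cosh x := by
  have hd : ∀ y : ℝ, HasDerivAt
      (fun t : ℝ => (t - t^3/3 + 2*t^5/15) * Real.cosh t - Real.sinh t)
      ((2*y^4/3 - y^2) * Real.cosh y + (y - y^3/3 + 2*y^5/15) * Real.sinh y) y := by
    intro y
    have h := ((((hasDerivAt_id y).sub ((hasDerivAt_pow 3 y).div_const 3)).add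
        (((hasDerivAt_pow 5 y).const_mul 2).div_const 15)).mul (Real.hasDerivAt_cosh y)).sub
      (Real.hasDerivAt_sinh y)
    refine h.congr_deriv ?_
    simp
    ring
  have hmono : MonotoneOn
      (fun t : ℝ => (t - t^3/3 + 2*t^5/15) * Real.cosh t - Real.sinh t) (Set.Ici 0) := by
    apply monotoneOn_of_deriv_nonneg (convex_Ici 0)
    · apply Continuous.continuousOn
      apply Continuous.sub _ Real.continuous_sinh
      exact ((continuous_id.sub ((continuous_pow 3).div_const 3)).add
        ((continuous_const.mul (continuous_pow 5)).div_const 15)).mul Real.continuous_cosh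
    · intro y hy
      exact (hd y).differentiableAt.differentiableWithinAt
    · intro y hy
      rw [interior_Ici] at hy
      rw [(hd y).deriv]
      have hs : 0 ≤ Real.sinh y := Real.sinh_nonneg_iff.2 hy.le
      have hc : (0:ℝ) < Real.cosh y := Real.cosh_pos y
      have hy' : (0:ℝ) < y := hy
      have hy5 : (0:ℝ) ≤ y^5 := pow_nonneg hy'.le 5
      have hp : 0 ≤ y - y^3/3 + 2*y^5/15 := by nlinarith [sq_nonneg (y^2 - 5/4), hy'.le]
      rcases le_or_gt (y^2) (3/2) with hcase | hcase
      · have hq : 0 ≤ y - y^3/3 := by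
          nlinarith [mul_nonneg hy'.le (show (0:ℝ) ≤ 3 - y^2 by linarith)]
        have h2 := aux2 hy.le
        nlinarith [mul_le_mul_of_nonneg_left h2 hq,
          mul_nonneg (show (0:ℝ) ≤ 2*y^5/15 by linarith) hs,
          mul_nonneg (show (0:ℝ) ≤ y^6/9 by positivity) hc.le]
      · have h1 : 0 ≤ 2*y^4/3 - y^2 := by nlinarith
        exact add_nonneg (mul_nonneg h1 hc.le) (mul_nonneg hp hs)
  have h := hmono (Set.self_mem_Ici) (Set.mem_Ici.2 hx) hx
  simp at h
  linarith

lemma tanh_le_self {x : ℝ} (hx : 0 ≤ x) : Real.tanh x ≤ x := by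
  rw [Real.tanh_eq_sinh_div_cosh, div_le_iff₀ (Real.cosh_pos x)]
  exact aux1 hx

lemma le_tanh_self {x : ℝ} (hx : 0 ≤ x) : x - x^3/3 ≤ Real.tanh x := by
  rw [Real.tanh_eq_sinh_div_cosh, le_div_iff₀ (Real.cosh_pos x)]
  exact aux2 hx

lemma tanh_le_poly {x : ℝ} (hx : 0 ≤ x) : Real.tanh x ≤ x - x^3/3 + 2*x^5/15 := by
  rw [Real.tanh_eq_sinh_div_cosh, div_le_iff₀ (Real.cosh_pos x)]
  exact aux3 hx

lemma key_bounds (α : ℝ) (hα : 0 < α) (K m : ℝ) (hK : 0 < K) (hK2 : K * (1+α) < 1/2)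
    (hm0 : 0 < m) (hm1 : m < 1)
    (heq : m = Real.tanh (K * m ^ 2 + (1 + α * K) * m)) :
    m^2 ≤ 30 * ((1+α) * K) ∧
    3*α / (1 + K*(1+α))^3 ≤ m^2 / K ∧
    m^2 / K ≤ (m + α) / (1/3 - 2*(K * m ^ 2 + (1 + α * K) * m)^2/15) := by
  set x : ℝ := K * m ^ 2 + (1 + α * K) * m with hx
  set B : ℝ := 1 + K*(1+α) with hB
  clear_value x B
  have hxpos : 0 < x := by rw [hx]; nlinarith [mul_pos hK (mul_pos hm0 hm0)]
  have hmx : m ≤ x := by rw [hx]; nlinarith [mul_pos hK (mul_pos hm0 hm0), mul_pos (mul_pos hα hK) hm0]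
  have hxle : x ≤ m * B := by
    rw [hx, hB]
    nlinarith [mul_nonneg (mul_nonneg hK.le hm0.le) (sub_nonneg.2 hm1.le)]
  have hBpos : (0:ℝ) < B := by rw [hB]; nlinarith
  have hx32 : x ≤ 3/2 := by
    have : m * B ≤ 1 * B := mul_le_mul_of_nonneg_right hm1.le hBpos.le
    have hB32 : B ≤ 3/2 := by rw [hB]; linarith
    linarith
  have hden : (1:ℝ)/30 ≤ 1/3 - 2*x^2/15 := by
    nlinarith [mul_nonneg (sub_nonneg.2 hx32) (show (0:ℝ) ≤ 3/2 + x by linarith)]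
  have hdenpos : (0:ℝ) < 1/3 - 2*x^2/15 := by linarith
  have e1 : K*(m+α)*m = x - m := by rw [hx]; ring
  -- upper bound
  have hub' : m ≤ x - x^3/3 + 2*x^5/15 := heq ▸ tanh_le_poly hxpos.le
  have hm3 : m^3 ≤ x^3 := pow_le_pow_left₀ hm0.le hmx 3
  have h1 : m^3 * (1/3 - 2*x^2/15) ≤ K*(m+α)*m := by
    linarith only [mul_le_mul_of_nonneg_right hm3 hdenpos.le, hub', e1]
  have h2 : m^2 * (1/3 - 2*x^2/15) ≤ K*(m+α) := by
    have h1' : (m^2 * (1/3 - 2*x^2/15)) * m ≤ (K*(m+α)) * m := by linarith only [h1]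
    exact le_of_mul_le_mul_right h1' hm0
  have crude : m^2 ≤ 30 * ((1+α) * K) := by
    linarith only [h2, mul_le_mul_of_nonneg_left hden (sq_nonneg m),
      mul_le_mul_of_nonneg_left (show m + α ≤ 1 + α by linarith) hK.le]
  refine ⟨crude, ?_, ?_⟩
  · -- lower bound
    have hB3 : (0:ℝ) < B^3 := pow_pos hBpos 3
    rw [div_le_div_iff₀ hB3 hK]
    have hlb' : x - x^3/3 ≤ m := heq ▸ le_tanh_self hxpos.le
    have hxm3 : x^3 ≤ m^3*B^3 := by
      calc x^3 ≤ (m*B)^3 := pow_le_pow_left₀ hxpos.le hxle 3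
        _ = m^3*B^3 := by ring
    have h3 : K*(m+α)*m ≤ m^3*B^3/3 := by linarith only [e1, hlb', hxm3]
    have h4 : K*(m+α) ≤ m^2*B^3/3 := by
      have h3' : (K*(m+α))*m ≤ (m^2*B^3/3)*m := by linarith only [h3]
      exact le_of_mul_le_mul_right h3' hm0
    linarith only [h4, mul_nonneg hK.le hm0.le]
  · rw [div_le_div_iff₀ hK hdenpos]
    linarith only [h2]

theorem critical_exponent_alpha_pos (α : ℝ) (hα : 0 < α) (M : ℝ → ℝ)
    (hM : ∀ K : ℝ, 0 < K → M K ∈ Set.Ioo (0 : ℝ) 1 ∧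
      M K = Real.tanh (K * (M K) ^ 2 + (1 + α * K) * M K)) :
    Filter.Tendsto (fun K => M K / Real.sqrt K) (nhdsWithin 0 (Set.Ioi 0))
      (nhds (Real.sqrt (3 * α))) := by
  set l := nhdsWithin (0:ℝ) (Set.Ioi 0) with hl
  have hK0 : Filter.Tendsto (fun K : ℝ => K) l (nhds 0) :=
    Filter.tendsto_id.mono_left nhdsWithin_le_nhds
  have hev1 : ∀ᶠ K in l, 0 < K := eventually_mem_nhdsWithin
  have hev2 : ∀ᶠ K in l, K * (1+α) < 1/2 := by
    have h : Filter.Tendsto (fun K : ℝ => K * (1+α)) l (nhds 0) := by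
      simpa using hK0.mul_const (1+α)
    exact h.eventually (eventually_lt_nhds (by norm_num))
  have hkey : ∀ᶠ K in l, (M K)^2 ≤ 30 * ((1+α) * K) ∧
      3*α / (1 + K*(1+α))^3 ≤ (M K)^2 / K ∧
      (M K)^2 / K ≤ (M K + α) / (1/3 - 2*(K * (M K) ^ 2 + (1 + α * K) * M K)^2/15) := by
    filter_upwards [hev1, hev2] with K hK hK2
    obtain ⟨⟨hm0, hm1⟩, heq⟩ := hM K hK
    exact key_bounds α hα K (M K) hK hK2 hm0 hm1 heq
  -- M K → 0
  have hm_lim : Filter.Tendsto M l (nhds 0) := by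
    have hsq : Filter.Tendsto (fun K : ℝ => Real.sqrt (30 * ((1+α) * K))) l (nhds 0) := by
      have h : Filter.Tendsto (fun K : ℝ => 30 * ((1+α) * K)) l (nhds 0) := by
        simpa using ((hK0.const_mul (1+α)).const_mul 30)
      simpa using h.sqrt
    apply tendsto_of_tendsto_of_tendsto_of_le_of_le' tendsto_const_nhds hsq
    · filter_upwards [hev1] with K hK
      exact (hM K hK).1.1.le
    · filter_upwards [hev1, hkey] with K hK hkeyK
      obtain ⟨⟨hm0, hm1⟩, -⟩ := hM K hK
      calc M K = Real.sqrt ((M K)^2) := (Real.sqrt_sq hm0.le).symm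
        _ ≤ Real.sqrt (30 * ((1+α) * K)) := Real.sqrt_le_sqrt hkeyK.1
  -- x → 0
  have hx_lim : Filter.Tendsto (fun K => K * (M K) ^ 2 + (1 + α * K) * M K) l (nhds 0) := by
    have h := (hK0.mul (hm_lim.pow 2)).add
      (((tendsto_const_nhds (x := (1:ℝ))).add (hK0.const_mul α)).mul hm_lim)
    simpa using h
  -- upper limit
  have hU : Filter.Tendsto
      (fun K => (M K + α) / (1/3 - 2*(K * (M K) ^ 2 + (1 + α * K) * M K)^2/15)) l
      (nhds (3*α)) := by
    have hnum : Filter.Tendsto (fun K => M K + α) l (nhds (0 + α)) :=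
      hm_lim.add_const α
    have hden : Filter.Tendsto
        (fun K => 1/3 - 2*(K * (M K) ^ 2 + (1 + α * K) * M K)^2/15) l
        (nhds (1/3 - 2*(0:ℝ)^2/15)) := by
      exact tendsto_const_nhds.sub (((hx_lim.pow 2).const_mul 2).div_const 15)
    have h := hnum.div hden (by norm_num)
    have he : (0 + α) / ((1:ℝ)/3 - 2*(0:ℝ)^2/15) = 3*α := by norm_num; ring
    rwa [he] at h
  -- lower limit
  have hL : Filter.Tendsto (fun K => 3*α / (1 + K*(1+α))^3) l (nhds (3*α)) := by
    have hden : Filter.Tendsto (fun K : ℝ => (1 + K*(1+α))^3) l (nhds ((1 + 0*(1+α))^3)) :=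
      (tendsto_const_nhds.add (hK0.mul_const (1+α))).pow 3
    have h := (tendsto_const_nhds (x := 3*α)).div hden (by norm_num)
    have he : 3*α / ((1 + (0:ℝ)*(1+α))^3) = 3*α := by norm_num
    rwa [he] at h
  have hmain : Filter.Tendsto (fun K => (M K)^2 / K) l (nhds (3*α)) := by
    apply tendsto_of_tendsto_of_tendsto_of_le_of_le' hL hU
    · filter_upwards [hkey] with K hk; exact hk.2.1
    · filter_upwards [hkey] with K hk; exact hk.2.2
  have hs := hmain.sqrt
  apply hs.congr'
  filter_upwards [hev1] with K hK
  obtain ⟨⟨hm0, -⟩, -⟩ := hM K hK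
  rw [Real.sqrt_div (sq_nonneg (M K)), Real.sqrt_sq hm0.le]
end
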